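/- arXiv:1605.08833 — 2 statements merged into one kernel-verified Lean document; each statement's English description precedes it below -/
import Mathlib

section
/- With F, b, n as above, for every σ ≥ 0 (componentwise) and every z ∈ [-1,1]^n satisfying (1/n) F z ≥ b (componentwise), the predictor g_j = clip(⟨x_j, σ⟩) achieves loss ℓ(z, g) = (1/n) Σ_j (1 − z_j g_j)/2 ≤ γ(σ)/2, where γ(σ) = −⟨b, σ⟩ + (1/n) Σ_j Ψ(⟨x_j, σ⟩). -/
noncomputable def Psi (x : ℝ) : ℝ := max 1 |x|
noncomputable def clip (x : ℝ) : ℝ := min 1 (max (-1) x)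

lemma key_ineq (s t : ℝ) (ht : t ∈ Set.Icc (-1 : ℝ) 1) :
    1 - t * clip s ≤ Psi s - t * s := by
  obtain ⟨h1, h2⟩ := ht
  unfold Psi clip
  rcases le_or_gt s (-1) with h | h
  · have hc : min 1 (max (-1) s) = -1 := by
      rw [max_eq_left h, min_eq_right (by norm_num)]
    have hp : max 1 |s| = -s := by
      rw [abs_of_nonpos (by linarith)]; exact max_eq_right (by linarith)
    rw [hc, hp]
    nlinarith [mul_nonneg (by linarith : (0:ℝ) ≤ 1 + t) (by linarith : (0:ℝ) ≤ -s - 1)]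
  · rcases le_or_gt s 1 with h' | h'
    · rw [max_eq_right h.le, min_eq_right h', max_eq_left (abs_le.mpr ⟨h.le, h'⟩)]
    · have hc : min 1 (max (-1) s) = 1 := by
        rw [max_eq_right (by linarith : (-1:ℝ) ≤ s)]; exact min_eq_left h'.le
      have hp : max 1 |s| = s := by
        rw [abs_of_pos (by linarith)]; exact max_eq_right h'.le
      rw [hc, hp]
      nlinarith [mul_nonneg (by linarith : (0:ℝ) ≤ 1 - t) (by linarith : (0:ℝ) ≤ s - 1)]

theorem loss_le_half_slack (p n : ℕ) (hn : 0 < n) (F : Fin p → Fin n → ℝ)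
    (hF : ∀ i j, F i j ∈ Set.Icc (-1 : ℝ) 1) (b : Fin p → ℝ)
    (σ : Fin p → ℝ) (hσ : ∀ i, 0 ≤ σ i)
    (z : Fin n → ℝ) (hz : ∀ j, z j ∈ Set.Icc (-1 : ℝ) 1)
    (hb : ∀ i, b i ≤ (1 / (n : ℝ)) * ∑ j, F i j * z j) :
    (1 / (n : ℝ)) * ∑ j, (1 - z j * clip (∑ i, F i j * σ i)) / 2 ≤
      (-(∑ i, b i * σ i) + (1 / (n : ℝ)) * ∑ j, Psi (∑ i, F i j * σ i)) / 2 := by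
  have hn' : (0 : ℝ) < (n : ℝ) := Nat.cast_pos.mpr hn
  have hinv : (0 : ℝ) ≤ 1 / (n : ℝ) := by positivity
  have step1 : ∑ j, (1 - z j * clip (∑ i, F i j * σ i)) / 2 ≤
      ∑ j, (Psi (∑ i, F i j * σ i) - z j * (∑ i, F i j * σ i)) / 2 := by
    apply Finset.sum_le_sum
    intro j _
    have := key_ineq (∑ i, F i j * σ i) (z j) (hz j)
    linarith
  have step2 : ∑ i, b i * σ i ≤ (1 / (n : ℝ)) * ∑ j, z j * (∑ i, F i j * σ i) := by
    have : ∑ i, b i * σ i ≤ ∑ i, ((1 / (n : ℝ)) * ∑ j, F i j * z j) * σ i := by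
      apply Finset.sum_le_sum
      intro i _
      exact mul_le_mul_of_nonneg_right (hb i) (hσ i)
    refine this.trans_eq ?_
    simp only [Finset.mul_sum, Finset.sum_mul]
    rw [Finset.sum_comm]
    exact Finset.sum_congr rfl fun j _ => Finset.sum_congr rfl fun i _ => by ring
  have h3 : (1 / (n : ℝ)) * ∑ j, (Psi (∑ i, F i j * σ i) - z j * (∑ i, F i j * σ i)) / 2
      = ((1 / (n : ℝ)) * ∑ j, Psi (∑ i, F i j * σ i)
        - (1 / (n : ℝ)) * ∑ j, z j * (∑ i, F i j * σ i)) / 2 := by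
    rw [Finset.mul_sum, Finset.mul_sum, Finset.mul_sum, ← Finset.sum_sub_distrib,
      Finset.sum_div]
    exact Finset.sum_congr rfl fun j _ => by ring
  calc (1 / (n : ℝ)) * ∑ j, (1 - z j * clip (∑ i, F i j * σ i)) / 2
      ≤ (1 / (n : ℝ)) * ∑ j, (Psi (∑ i, F i j * σ i) - z j * (∑ i, F i j * σ i)) / 2 :=
        mul_le_mul_of_nonneg_left step1 hinv
    _ = ((1 / (n : ℝ)) * ∑ j, Psi (∑ i, F i j * σ i)
        - (1 / (n : ℝ)) * ∑ j, z j * (∑ i, F i j * σ i)) / 2 := h3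
    _ ≤ (-(∑ i, b i * σ i) + (1 / (n : ℝ)) * ∑ j, Psi (∑ i, F i j * σ i)) / 2 := by
        linarith
end

section
/- With F, b as above, suppose the constraint set Z = {z ∈ [-1,1]^n : (1/n) F z ≥ b} is nonempty. Then min_{g ∈ [-1,1]^n} max_{z ∈ Z} (1/n) Σ_j (1 − z_j g_j)/2 ≤ (1/2) inf_{σ ≥ 0} γ(σ), where γ(σ) = −⟨b, σ⟩ + (1/n) Σ_j Ψ(⟨x_j, σ⟩). -/
lemma psi_key (a z : ℝ) (h1 : -1 ≤ z) (h2 : z ≤ 1) :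
    1 - z * max (-1) (min 1 a) ≤ Psi a - a * z := by
  unfold Psi
  rcases le_or_gt a (-1) with h | h
  · rw [min_eq_right (by linarith), max_eq_left h,
      abs_of_nonpos (by linarith), max_eq_right (by linarith)]
    nlinarith
  · rcases le_or_gt a 1 with h' | h'
    · rw [min_eq_right h', max_eq_right h.le]
      have : |a| ≤ 1 := abs_le.mpr ⟨h.le, h'⟩
      rw [max_eq_left this]
      ring_nf
      linarith [mul_comm a z]
    · rw [min_eq_left h'.le, max_eq_right (by norm_num : (-1:ℝ) ≤ 1),
        abs_of_pos (by linarith), max_eq_right h'.le]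
      nlinarith

theorem minimax_le_half_inf_slack (p n : ℕ) (F : Fin p → Fin n → ℝ)
    (hF : ∀ i j, F i j ∈ Set.Icc (-1 : ℝ) 1) (b : Fin p → ℝ)
    (Z : Set (Fin n → ℝ))
    (hZ : Z = {z | (∀ j, z j ∈ Set.Icc (-1 : ℝ) 1) ∧
      ∀ i, b i ≤ (1 / (n : ℝ)) * ∑ j, F i j * z j})
    (hZne : Z.Nonempty) :
    sInf ((fun g : Fin n → ℝ =>
        sSup ((fun z : Fin n → ℝ => (1 / (n : ℝ)) * ∑ j, (1 - z j * g j) / 2) '' Z)) ''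
        {g | ∀ j, g j ∈ Set.Icc (-1 : ℝ) 1}) ≤
      (1 / 2) * sInf ((fun σ : Fin p → ℝ =>
        -(∑ i, b i * σ i) + (1 / (n : ℝ)) * ∑ j, Psi (∑ i, F i j * σ i)) ''
        {σ | ∀ i, 0 ≤ σ i}) := by
  set L := ((fun g : Fin n → ℝ =>
      sSup ((fun z : Fin n → ℝ => (1 / (n : ℝ)) * ∑ j, (1 - z j * g j) / 2) '' Z)) ''
      {g | ∀ j, g j ∈ Set.Icc (-1 : ℝ) 1}) with hL
  set R := ((fun σ : Fin p → ℝ =>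
      -(∑ i, b i * σ i) + (1 / (n : ℝ)) * ∑ j, Psi (∑ i, F i j * σ i)) ''
      {σ | ∀ i, 0 ≤ σ i}) with hR
  have hn : (0:ℝ) ≤ 1 / (n:ℝ) := by positivity
  -- L is bounded below by 0
  have hLbdd : ∀ y ∈ L, (0:ℝ) ≤ y := by
    rintro y ⟨g, hg, rfl⟩
    apply Real.sSup_nonneg
    rintro x ⟨z, hz, rfl⟩
    rw [hZ] at hz
    apply mul_nonneg hn
    apply Finset.sum_nonneg
    intro j _
    have h1 := (hz.1 j).1
    have h2 := (hz.1 j).2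
    have h3 := (hg j).1
    have h4 := (hg j).2
    nlinarith
  have hLbb : BddBelow L := ⟨0, fun y hy => hLbdd y hy⟩
  have hRne : R.Nonempty := ⟨_, ⟨(fun _ => 0), fun i => le_refl 0, rfl⟩⟩
  -- for each admissible σ, sInf L ≤ (1/2) * value at σ
  have key : ∀ r ∈ R, sInf L ≤ (1/2) * r := by
    rintro r ⟨σ, hσ, rfl⟩
    set a : Fin n → ℝ := fun j => ∑ i, F i j * σ i with ha
    set g : Fin n → ℝ := fun j => max (-1) (min 1 (a j)) with hgdef
    have hg : g ∈ {g : Fin n → ℝ | ∀ j, g j ∈ Set.Icc (-1 : ℝ) 1} := by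
      intro j
      constructor
      · exact le_max_left _ _
      · exact max_le (by norm_num) (min_le_left _ _)
    have hmem : sSup ((fun z : Fin n → ℝ =>
        (1 / (n : ℝ)) * ∑ j, (1 - z j * g j) / 2) '' Z) ∈ L := ⟨g, hg, rfl⟩
    refine le_trans (csInf_le hLbb hmem) ?_
    apply csSup_le (hZne.image _)
    rintro x ⟨z, hz, rfl⟩
    rw [hZ] at hz
    obtain ⟨hz1, hz2⟩ := hz
    -- bound on ⟨b, σ⟩
    have hbσ : ∑ i, b i * σ i ≤ (1 / (n:ℝ)) * ∑ j, a j * z j := by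
      have step1 : ∑ i, b i * σ i ≤ ∑ i, σ i * ((1 / (n:ℝ)) * ∑ j, F i j * z j) := by
        apply Finset.sum_le_sum
        intro i _
        rw [mul_comm]
        exact mul_le_mul_of_nonneg_left (hz2 i) (hσ i)
      have step2 : ∑ i, σ i * ((1 / (n:ℝ)) * ∑ j, F i j * z j)
          = (1 / (n:ℝ)) * ∑ j, a j * z j := by
        simp only [ha, Finset.mul_sum, Finset.sum_mul]
        rw [Finset.sum_comm]
        exact Finset.sum_congr rfl fun j _ => Finset.sum_congr rfl fun i _ => by ring
      linarith [step1, step2.le, step2.ge]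
    have hsum : ∑ j, (1 - z j * g j) / 2 ≤ ∑ j, (Psi (a j) - a j * z j) / 2 := by
      apply Finset.sum_le_sum
      intro j _
      have := psi_key (a j) (z j) (hz1 j).1 (hz1 j).2
      linarith
    calc (1 / (n:ℝ)) * ∑ j, (1 - z j * g j) / 2
        ≤ (1 / (n:ℝ)) * ∑ j, (Psi (a j) - a j * z j) / 2 :=
          mul_le_mul_of_nonneg_left hsum hn
      _ = (1/2) * (-((1 / (n:ℝ)) * ∑ j, a j * z j) + (1 / (n:ℝ)) * ∑ j, Psi (a j)) := by
          rw [← Finset.sum_div, Finset.sum_sub_distrib]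
          ring
      _ ≤ (1/2) * (-(∑ i, b i * σ i) + (1 / (n:ℝ)) * ∑ j, Psi (a j)) := by
          linarith [hbσ]
  -- conclude
  have h2 : 2 * sInf L ≤ sInf R := by
    apply le_csInf hRne
    intro r hr
    have := key r hr
    linarith
  linarith [h2]
end
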